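/- Let W > 0, λ > 0, t_C ≥ 0, E_C > 0 and D > t_C·(1 + λ·t_C) be real constants. Let E(s) = (W·s² + E_C)·(1 + λ·(W/s + t_C)), T(s) = (W/s + t_C)·(1 + λ·(W/s + t_C)), let s* be the unique minimizer of E on (0, ∞), and let s₀ = W·(1 + 2λ·t_C + √(4λ·D + 1)) / (2·(D − t_C·(1 + λ·t_C))). Then sₒₚₜ = max(s₀, s*) satisfies T(sₒₚₜ) ≤ D, and for every s > 0 with T(s) ≤ D one has E(sₒₚₜ) ≤ E(s). -/

import Mathlib

open Real Set

/-- Single chunk, single speed, expected deadline. With `s*` the unique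
minimizer of the expected energy `E` on `(0, ∞)` and
`s₀ = W (1 + 2 λ t_C + √(4 λ D + 1)) / (2 (D − t_C (1 + λ t_C)))`, the speed
`sₒₚₜ = max(s₀, s*)` meets the expected deadline and minimizes the expected energy
among all speeds `s > 0` meeting it. -/
theorem stmt_3 (W lam tC EC D : ℝ) (hW : 0 < W) (hlam : 0 < lam) (htC : 0 ≤ tC)
    (hEC : 0 < EC) (hD : tC * (1 + lam * tC) < D)
    (sstar : ℝ) (hsstar : 0 < sstar)
    (hmin : ∀ s : ℝ, 0 < s →
      (W * sstar ^ 2 + EC) * (1 + lam * (W / sstar + tC)) ≤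
        (W * s ^ 2 + EC) * (1 + lam * (W / s + tC)))
    (huniq : ∀ s : ℝ, 0 < s →
      (∀ t : ℝ, 0 < t →
        (W * s ^ 2 + EC) * (1 + lam * (W / s + tC)) ≤
          (W * t ^ 2 + EC) * (1 + lam * (W / t + tC))) → s = sstar)
    (s0 sopt : ℝ)
    (hs0 : s0 = W * (1 + 2 * lam * tC + Real.sqrt (4 * lam * D + 1)) /
      (2 * (D - tC * (1 + lam * tC))))
    (hsopt : sopt = max s0 sstar) :
    (W / sopt + tC) * (1 + lam * (W / sopt + tC)) ≤ D ∧
    ∀ s : ℝ, 0 < s → (W / s + tC) * (1 + lam * (W / s + tC)) ≤ D →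
      (W * sopt ^ 2 + EC) * (1 + lam * (W / sopt + tC)) ≤
        (W * s ^ 2 + EC) * (1 + lam * (W / s + tC)) := by
  have hD' : 0 < D - tC * (1 + lam * tC) := by linarith
  have hDpos : 0 < D := by
    have : 0 ≤ tC * (1 + lam * tC) := mul_nonneg htC (by positivity)
    linarith
  set r := Real.sqrt (4 * lam * D + 1) with hr
  have hr2 : r ^ 2 = 4 * lam * D + 1 := Real.sq_sqrt (by positivity)
  have hrpos : 0 ≤ r := Real.sqrt_nonneg _
  have hrgt : 2 * lam * tC + 1 < r := by nlinarith
  have hs0pos : 0 < s0 := by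
    rw [hs0]; apply div_pos (by positivity) (by linarith)
  have hWs0 : W / s0 = (r - 1 - 2 * lam * tC) / (2 * lam) := by
    rw [hs0]
    rw [div_div_eq_mul_div, div_eq_div_iff (by positivity) (by positivity)]
    nlinarith [hr2]
  have hT0D : (W / s0 + tC) * (1 + lam * (W / s0 + tC)) = D := by
    rw [hWs0]
    field_simp
    nlinarith [hr2]
  have hTmono : ∀ a b : ℝ, 0 < a → a < b →
      (W / b + tC) * (1 + lam * (W / b + tC)) < (W / a + tC) * (1 + lam * (W / a + tC)) := by
    intro a b ha hab
    have hb : 0 < b := ha.trans hab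
    have h1 : W / b < W / a := by
      apply div_lt_div_of_pos_left hW ha hab
    have h2 : 0 < W / b := div_pos hW hb
    have key : 0 < ((W / a + tC) - (W / b + tC)) * (1 + lam * ((W / a + tC) + (W / b + tC))) :=
      mul_pos (by linarith) (by nlinarith)
    nlinarith [key]
  have hsoptpos : 0 < sopt := by
    rw [hsopt]; exact lt_max_of_lt_right hsstar
  have hsopt_ge : s0 ≤ sopt := by rw [hsopt]; exact le_max_left _ _
  constructor
  · rcases eq_or_lt_of_le hsopt_ge with h | h
    · rw [← h, hT0D]
    · exact le_of_lt (lt_of_lt_of_eq (hTmono s0 sopt hs0pos h) hT0D)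
  · intro s hs hTs
    have hs_ge : s0 ≤ s := by
      by_contra h
      push_neg at h
      have := hTmono s s0 hs h
      linarith [hT0D]
    set g : ℝ → ℝ := fun x =>
      ((1 + lam * tC) * W) * x ^ (2 : ℤ) + (lam * W ^ 2) * x + (1 + lam * tC) * EC +
        (lam * W * EC) * x ^ (-1 : ℤ) with hg
    have hEg : ∀ x : ℝ, 0 < x →
        (W * x ^ 2 + EC) * (1 + lam * (W / x + tC)) = g x := by
      intro x hx
      rw [hg]
      simp only [zpow_neg_one, zpow_two]
      field_simp
      ring
    have hconv : ConvexOn ℝ (Ioi (0 : ℝ)) g := by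
      have h2 : ConvexOn ℝ (Ioi (0 : ℝ)) (fun x : ℝ => ((1 + lam * tC) * W) * x ^ (2 : ℤ)) := by
        simpa [smul_eq_mul] using
          ((strictConvexOn_zpow (m := 2) (by norm_num) (by norm_num)).convexOn.smul
            (c := (1 + lam * tC) * W) (by positivity))
      have hlin : ConvexOn ℝ (Ioi (0 : ℝ))
          (fun x : ℝ => (lam * W ^ 2) * x + (1 + lam * tC) * EC) := by
        exact (LinearMap.mulLeft ℝ (lam * W ^ 2)).convexOn (convex_Ioi 0) |>.add
          (convexOn_const _ (convex_Ioi 0))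
      have hinv : ConvexOn ℝ (Ioi (0 : ℝ)) (fun x : ℝ => (lam * W * EC) * x ^ (-1 : ℤ)) := by
        simpa [smul_eq_mul] using
          ((strictConvexOn_zpow (m := -1) (by norm_num) (by norm_num)).convexOn.smul
            (c := lam * W * EC) (by positivity))
      have h := (h2.add hlin).add hinv
      convert h using 1
      · rfl
      funext x
      simp only [Pi.add_apply]
      ring
    rcases le_total s0 sstar with hcase | hcase
    · have hso : sopt = sstar := by rw [hsopt, max_eq_right hcase]
      rw [hso]
      exact hmin s hs
    · have hso : sopt = s0 := by rw [hsopt, max_eq_left hcase]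
      rw [hso]
      have hmem : s0 ∈ segment ℝ sstar s := Icc_subset_segment ⟨hcase, hs_ge⟩
      have hseg := hconv.le_on_segment (mem_Ioi.2 hsstar) (mem_Ioi.2 hs) hmem
      have h1 : g sstar ≤ g s := by
        rw [← hEg sstar hsstar, ← hEg s hs]
        exact hmin s hs
      rw [hEg s0 hs0pos, hEg s hs]
      exact le_trans hseg (max_le h1 le_rfl)
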